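/- For all real numbers p, q, n with 0 < p ≤ q < 1 and n ≥ 1, one has (1 − p/n)·log((1 − p/n)/(1 − q/n)) ≤ (1/n)·(1 − p)·log((1−p)/(1−q)). -/

import Mathlib

private lemma aux_antitone (δ x x' : ℝ) (hδ : 0 ≤ δ) (hx : δ < x) (hxx : x ≤ x') :
    x' * (Real.log x' - Real.log (x' - δ)) ≤ x * (Real.log x - Real.log (x - δ)) := by
  set g : ℝ → ℝ := fun y => y * (Real.log y - Real.log (y - δ)) with hg
  have key : ∀ y : ℝ, δ < y →
      HasDerivAt g ((Real.log y - Real.log (y - δ)) + y * (1 / y - 1 / (y - δ))) y := by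
    intro y hy
    have hy0 : y ≠ 0 := by nlinarith
    have hyδ : y - δ ≠ 0 := by nlinarith
    have h1 : HasDerivAt (fun y : ℝ => Real.log y - Real.log (y - δ))
        (1 / y - 1 / (y - δ)) y := by
      have h2 : HasDerivAt (fun y : ℝ => Real.log (y - δ)) (1 / (y - δ)) y := by
        have := (((hasDerivAt_id y).sub_const δ).log hyδ)
        simpa using this
      simpa [one_div] using (Real.hasDerivAt_log hy0).fun_sub h2
    have := (hasDerivAt_id y).fun_mul h1
    exact this.congr_deriv (by simp)
  have hanti : AntitoneOn g (Set.Icc x x') := by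
    apply antitoneOn_of_deriv_nonpos (convex_Icc x x')
    · intro y hy
      have hy' : δ < y := lt_of_lt_of_le hx hy.1
      exact (key y hy').continuousAt.continuousWithinAt
    · intro y hy
      rw [interior_Icc] at hy
      have hy' : δ < y := lt_of_lt_of_le hx hy.1.le
      exact (key y hy').differentiableAt.differentiableWithinAt
    · intro y hy
      rw [interior_Icc] at hy
      have hy' : δ < y := lt_of_lt_of_le hx hy.1.le
      have hy0 : 0 < y := lt_of_le_of_lt hδ hy'
      have hyδ : 0 < y - δ := by linarith
      rw [(key y hy').deriv]
      have hlog : Real.log y - Real.log (y - δ) ≤ y / (y - δ) - 1 := by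
        have := Real.log_le_sub_one_of_pos (show (0:ℝ) < y / (y - δ) by positivity)
        rwa [Real.log_div hy0.ne' hyδ.ne'] at this
      have heq : y * (1 / y - 1 / (y - δ)) = 1 - y / (y - δ) := by
        field_simp
      linarith
  exact hanti (Set.left_mem_Icc.mpr hxx) (Set.right_mem_Icc.mpr hxx) hxx

/-- For all real `p, q, n` with `0 < p ≤ q < 1` and `n ≥ 1`,
`(1 − p/n)·log((1 − p/n)/(1 − q/n)) ≤ (1/n)·(1 − p)·log((1−p)/(1−q))`. -/
theorem one_sub_div_mul_log_le (p q n : ℝ) (hp : 0 < p) (hpq : p ≤ q) (hq : q < 1)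
    (hn : 1 ≤ n) :
    (1 - p / n) * Real.log ((1 - p / n) / (1 - q / n)) ≤
      (1 / n) * ((1 - p) * Real.log ((1 - p) / (1 - q))) := by
  have hn0 : (0:ℝ) < n := lt_of_lt_of_le one_pos hn
  have hq0 : 0 < q := lt_of_lt_of_le hp hpq
  have hp1 : p < 1 := lt_of_le_of_lt hpq hq
  have hbn : 0 < 1 - q / n := by
    have : q / n ≤ q := by
      rw [div_le_iff₀ hn0]; nlinarith
    linarith
  have han : 0 < 1 - p / n := by
    have : p / n ≤ q / n := by gcongr
    linarith
  have hB : 0 < 1 - q := by linarith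
  have hA : 0 < 1 - p := by linarith
  set δ := (q - p) / n with hδdef
  have hδ : 0 ≤ δ := by rw [hδdef]; exact div_nonneg (by linarith) hn0.le
  have hx : δ < (1 - p) / n := by
    rw [div_lt_div_iff₀ hn0 hn0]; nlinarith
  have hxx : (1 - p) / n ≤ 1 - p / n := by
    have h1 : (1:ℝ) - p / n = (n - p) / n := by field_simp
    rw [h1]
    gcongr
  have key := aux_antitone δ ((1 - p) / n) (1 - p / n) hδ hx hxx
  have e1 : (1 - p / n) - δ = 1 - q / n := by rw [hδdef]; field_simp; ring
  have e2 : (1 - p) / n - δ = (1 - q) / n := by rw [hδdef]; ring_nf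
  rw [e1, e2] at key
  have l1 : Real.log ((1 - p / n) / (1 - q / n)) = Real.log (1 - p / n) - Real.log (1 - q / n) :=
    Real.log_div han.ne' hbn.ne'
  have l2 : Real.log ((1 - p) / n) = Real.log (1 - p) - Real.log n :=
    Real.log_div hA.ne' hn0.ne'
  have l3 : Real.log ((1 - q) / n) = Real.log (1 - q) - Real.log n :=
    Real.log_div hB.ne' hn0.ne'
  have l4 : Real.log ((1 - p) / (1 - q)) = Real.log (1 - p) - Real.log (1 - q) :=
    Real.log_div hA.ne' hB.ne'
  rw [l2, l3] at key
  rw [l1, l4]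
  calc (1 - p / n) * (Real.log (1 - p / n) - Real.log (1 - q / n))
      ≤ (1 - p) / n * (Real.log (1 - p) - Real.log n - (Real.log (1 - q) - Real.log n)) := key
    _ = 1 / n * ((1 - p) * (Real.log (1 - p) - Real.log (1 - q))) := by ring
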